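/- Let M be a matroid on a finite ground set E with base family 𝓑, and suppose M has at least one pair of adjacent bases. Then there exists a matroid M' on E whose family of bases is exactly the adjacency family A(𝓑). (In the language of ideals: the adjacency ideal of a matroidal ideal is again matroidal.) -/

import Mathlib

/-- Two sets are *adjacent* if each has exactly one element outside the other. -/
def AdjacentSets {α : Type*} (B C : Set α) : Prop :=
  (B \ C).ncard = 1 ∧ (C \ B).ncard = 1

/-- The *adjacency family* of a family of sets: all unions of adjacent pairs of members. -/
def adjFam {α : Type*} (𝓕 : Set (Set α)) : Set (Set α) :=
  {U | ∃ B ∈ 𝓕, ∃ C ∈ 𝓕, AdjacentSets B C ∧ U = B ∪ C}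

namespace AdjFamAux

open Set

variable {α : Type*}

/-- Auxiliary predicate: `X` contains a base and has exactly one more element than a base,
and every element of `X` is a nonloop. -/
def P (M : Matroid α) (X : Set α) : Prop :=
  (∃ B, M.IsBase B ∧ B ⊆ X ∧ X.encard = B.encard + 1) ∧ ∀ x ∈ X, M.Indep {x}

theorem p_iff_mem_adjFam (M : Matroid α) (hfin : M.E.Finite) (X : Set α) :
    P M X ↔ X ∈ adjFam {B | M.IsBase B} := by
  constructor
  · rintro ⟨⟨B, hB, hBX, hcard⟩, hnl⟩
    have hBfin : B.Finite := hfin.subset hB.subset_ground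
    have hdiff : (X \ B).encard = 1 := by
      have h1 := Set.encard_diff_add_encard_of_subset hBX
      rw [hcard] at h1
      have hBne : B.encard ≠ ⊤ := hBfin.encard_lt_top.ne
      exact ENat.add_left_injective_of_ne_top hBne (show (X \ B).encard + B.encard = 1 + B.encard by rw [h1, add_comm])
    obtain ⟨e, he⟩ := Set.encard_eq_one.mp hdiff
    have he' : e ∈ X \ B := by rw [he]; rfl
    have heX : e ∈ X := he'.1
    have heB : e ∉ B := he'.2
    have hXeq : X = insert e B := by
      apply Set.Subset.antisymm
      · intro x hx
        by_cases hxB : x ∈ B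
        · exact Set.mem_insert_of_mem _ hxB
        · have hxe : x ∈ X \ B := ⟨hx, hxB⟩
          rw [he] at hxe
          rw [Set.mem_singleton_iff.mp hxe]
          exact Set.mem_insert _ _
      · exact Set.insert_subset heX hBX
    have hei : M.Indep {e} := hnl e heX
    obtain ⟨B', hB', heB', hB'sub⟩ := hei.exists_isBase_subset_union_isBase hB
    have heB'' : e ∈ B' := heB' rfl
    have hB'B : B' \ B = {e} := by
      apply Set.Subset.antisymm
      · intro x hx
        rcases hB'sub hx.1 with h | h
        · exact h
        · exact absurd h hx.2
      · exact Set.singleton_subset_iff.mpr ⟨heB'', heB⟩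
    have hd1 : (B' \ B).encard = 1 := by rw [hB'B]; simp
    have hd2 : (B \ B').encard = 1 := by rw [hB.encard_sdiff_comm hB']; exact hd1
    refine ⟨B, hB, B', hB', ⟨?_, ?_⟩, ?_⟩
    · obtain ⟨f, hf⟩ := Set.encard_eq_one.mp hd2
      rw [hf]; simp
    · rw [hB'B]; simp
    · rw [hXeq]
      apply Set.Subset.antisymm
      · exact Set.insert_subset (Set.mem_union_right _ heB'') (Set.subset_union_left)
      · apply Set.union_subset (Set.subset_insert _ _)
        intro x hx
        rcases hB'sub hx with h | h
        · exact h ▸ Set.mem_insert _ _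
        · exact Set.mem_insert_of_mem _ h
  · rintro ⟨B, hB, C, hC, ⟨_, hCB⟩, rfl⟩
    obtain ⟨e, he⟩ := Set.ncard_eq_one.mp hCB
    have he' : e ∈ C \ B := by rw [he]; rfl
    have heB : e ∉ B := he'.2
    have hunion : B ∪ C = insert e B := by
      apply Set.Subset.antisymm
      · rintro x (h | h)
        · exact Set.mem_insert_of_mem _ h
        · by_cases hxB : x ∈ B
          · exact Set.mem_insert_of_mem _ hxB
          · have hxe : x ∈ C \ B := ⟨h, hxB⟩
            rw [he] at hxe
            rw [Set.mem_singleton_iff.mp hxe]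
            exact Set.mem_insert _ _
      · exact Set.insert_subset (Set.mem_union_right _ he'.1) Set.subset_union_left
    constructor
    · refine ⟨B, hB, Set.subset_union_left, ?_⟩
      rw [hunion, Set.encard_insert_of_notMem heB]
    · intro x hx
      rcases hx with h | h
      · exact hB.indep.subset (Set.singleton_subset_iff.mpr h)
      · exact hC.indep.subset (Set.singleton_subset_iff.mpr h)

theorem exchange (M : Matroid α) (hfin : M.E.Finite) :
    Matroid.ExchangeProperty (P M) := by
  intro X Y hX hY a ha
  obtain ⟨⟨B, hB, hBX, hcardX⟩, hnlX⟩ := hX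
  obtain ⟨⟨C, hC, hCY, hcardY⟩, hnlY⟩ := hY
  have hXE : X ⊆ M.E := fun x hx => Set.singleton_subset_iff.mp (hnlX x hx).subset_ground
  have hYE : Y ⊆ M.E := fun x hx => Set.singleton_subset_iff.mp (hnlY x hx).subset_ground
  have hXY : X.encard = Y.encard := by
    rw [hcardX, hcardY, hB.encard_eq_encard_of_isBase hC]
  -- Y \ X is nonempty
  have hYX : (Y \ X).Nonempty := by
    rw [Set.nonempty_iff_ne_empty]
    intro h
    have hYsub : Y ⊆ X := by
      intro y hy
      by_contra hyx
      exact (Set.eq_empty_iff_forall_notMem.mp h y) ⟨hy, hyx⟩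
    have : Y = X := (hfin.subset hYE).eq_of_subset_of_encard_le hYsub hXY.le
    exact ha.2 (this ▸ ha.1)
  by_cases hcase : ∃ B₀, M.IsBase B₀ ∧ B₀ ⊆ X \ {a}
  · obtain ⟨B₀, hB₀, hB₀X⟩ := hcase
    obtain ⟨b, hb⟩ := hYX
    refine ⟨b, hb, ⟨⟨B₀, hB₀, hB₀X.trans (Set.subset_insert _ _), ?_⟩, ?_⟩⟩
    · have hbX : b ∉ X \ {a} := fun h => hb.2 h.1
      rw [Set.encard_insert_of_notMem hbX, Set.encard_diff_singleton_add_one ha.1,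
        hcardX, hB.encard_eq_encard_of_isBase hB₀]
    · intro x hx
      rcases hx with h | h
      · exact h ▸ hnlY b hb.1
      · exact hnlX x h.1
  · -- X \ {a} contains no base; so some b ∈ Y is outside the closure of X \ {a}
    have haB : a ∈ B := by
      by_contra haB
      exact hcase ⟨B, hB, fun x hx => ⟨hBX hx, fun hxa => haB (hxa ▸ hx)⟩⟩
    have hXaE : X \ {a} ⊆ M.E := Set.diff_subset.trans hXE
    obtain ⟨b, hbY, hbcl⟩ : ∃ b ∈ Y, b ∉ M.closure (X \ {a}) := by
      by_contra h
      push_neg at h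
      have hYcl : Y ⊆ M.closure (X \ {a}) := h
      have hcl : M.closure (X \ {a}) = M.E := by
        apply Set.Subset.antisymm (M.closure_subset_ground _)
        have h1 : M.E = M.closure C := hC.closure_eq.symm
        rw [h1]
        exact M.closure_subset_closure_of_subset_closure (fun x hx => hYcl (hCY hx))
      obtain ⟨I, hI⟩ := M.exists_isBasis (X \ {a}) hXaE
      have hIbase : M.IsBase I := by
        rw [Matroid.isBase_iff_indep_closure_eq]
        exact ⟨hI.indep, by rw [hI.closure_eq_closure, hcl]⟩
      exact hcase ⟨I, hIbase, hI.subset⟩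
    have hbXa : b ∉ X \ {a} := fun h => hbcl (M.mem_closure_of_mem h hXaE)
    have hba : b ≠ a := fun h => ha.2 (h ▸ hbY)
    have hbX : b ∉ X := fun h => hbXa ⟨h, hba⟩
    have hbB : b ∉ B := fun h => hbX (hBX h)
    -- insert b (B \ {a}) is a base
    have hBa : M.Indep (B \ {a}) := hB.indep.subset Set.diff_subset
    have hbBa : b ∉ B \ {a} := fun h => hbB h.1
    have hind : M.Indep (insert b (B \ {a})) := by
      rw [hBa.insert_indep_iff_of_notMem hbBa]
      refine ⟨hYE hbY, fun h => hbcl ?_⟩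
      exact M.closure_subset_closure (Set.diff_subset_diff_left hBX) h
    have hB' : M.IsBase (insert b (B \ {a})) := hB.exchange_isBase_of_indep hbB hind
    refine ⟨b, ⟨hbY, hbX⟩, ⟨⟨insert b (B \ {a}), hB', ?_, ?_⟩, ?_⟩⟩
    · exact Set.insert_subset_insert (Set.diff_subset_diff_left hBX)
    · rw [Set.encard_insert_of_notMem hbXa, Set.encard_diff_singleton_add_one ha.1,
        hcardX, hB.encard_eq_encard_of_isBase hB']
    · intro x hx
      rcases hx with h | h
      · exact h ▸ hnlY b hbY
      · exact hnlX x h.1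

end AdjFamAux

/-- Let `M` be a matroid on a finite ground set `E` with base family `𝓑`,
and suppose `M` has at least one pair of adjacent bases.  Then there is a matroid `M'` on
`E` whose family of bases is exactly the adjacency family `A(𝓑)`.  (In the language of
ideals: the adjacency ideal of a matroidal ideal is again matroidal.) -/
theorem adjFam_isBaseFamily {α : Type*} (M : Matroid α) (hfin : M.E.Finite)
    (𝓑 : Set (Set α)) (h𝓑 : 𝓑 = {B | M.IsBase B})
    (hadj : ∃ B ∈ 𝓑, ∃ C ∈ 𝓑, AdjacentSets B C) :
    ∃ M' : Matroid α, M'.E = M.E ∧ {B | M'.IsBase B} = adjFam 𝓑 := by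
  subst h𝓑
  have hexists : ∃ X, X ∈ adjFam {B | M.IsBase B} := by
    obtain ⟨B, hB, C, hC, hadj'⟩ := hadj
    exact ⟨B ∪ C, B, hB, C, hC, hadj', rfl⟩
  have hexch : Matroid.ExchangeProperty (· ∈ adjFam {B | M.IsBase B}) := by
    intro X Y hX hY a ha
    rw [← AdjFamAux.p_iff_mem_adjFam M hfin] at hX hY
    obtain ⟨b, hb, hP⟩ := AdjFamAux.exchange M hfin X Y hX hY a ha
    exact ⟨b, hb, (AdjFamAux.p_iff_mem_adjFam M hfin _).mp hP⟩
  have hsub : ∀ X, X ∈ adjFam {B | M.IsBase B} → X ⊆ M.E := by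
    intro X hX
    obtain ⟨⟨B, hB, hBX, _⟩, hnl⟩ := (AdjFamAux.p_iff_mem_adjFam M hfin X).mpr hX
    exact fun x hx => Set.singleton_subset_iff.mp (hnl x hx).subset_ground
  refine ⟨Matroid.ofIsBaseOfFinite hfin (· ∈ adjFam {B | M.IsBase B}) hexists hexch hsub, ?_, ?_⟩
  · simp
  · ext X
    simp [Matroid.ofIsBaseOfFinite_isBase]
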